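/- arXiv:1607.06417 — 7 statements merged into one kernel-verified Lean document; each statement's English description precedes it below -/
import Mathlib

section
/- If Y_C ≠ 0, 1 + ρ_L·exp(−2Γd) ≠ 0, α = Re(Γ) > 0 and ρ_L ≠ 0, then the distance can be recovered from the input reflection coefficient by the formula d = (log|ρ_L| − log|ρ(d)|)/(2α) (equation (3) of the paper). -/
/-- Network admittance seen at distance `d` from a load with reflection
coefficient `ρL`, on a line with characteristic admittance `YC` and
propagation constant `Γ`. -/
noncomputable def Ynet (YC ρL Γ : ℂ) (d : ℝ) : ℂ :=
  YC * (1 - ρL * Complex.exp (-2 * Γ * d)) / (1 + ρL * Complex.exp (-2 * Γ * d))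

/-- Input reflection coefficient at distance `d`. -/
noncomputable def ρin (YC ρL Γ : ℂ) (d : ℝ) : ℂ :=
  (YC - Ynet YC ρL Γ d) / (YC + Ynet YC ρL Γ d)

theorem rho_in_eq (YC ρL Γ : ℂ) (d : ℝ) (hYC : YC ≠ 0)
    (hden : 1 + ρL * Complex.exp (-2 * Γ * d) ≠ 0) :
    ρin YC ρL Γ d = ρL * Complex.exp (-2 * Γ * d) := by
  set z := ρL * Complex.exp (-2 * Γ * d) with hz
  have hY : Ynet YC ρL Γ d = YC * (1 - z) / (1 + z) := rfl
  have hsum : YC + Ynet YC ρL Γ d = 2 * YC / (1 + z) := by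
    rw [hY]; field_simp; ring
  have hdiff : YC - Ynet YC ρL Γ d = 2 * YC * z / (1 + z) := by
    rw [hY]; field_simp; ring
  rw [ρin, hsum, hdiff]
  field_simp

/-- Equation (3): the distance is recovered from the modulus of the input
reflection coefficient on a lossy line with a non-matched load. -/
theorem distance_from_reflection (YC ρL Γ : ℂ) (d : ℝ) (hYC : YC ≠ 0)
    (hden : 1 + ρL * Complex.exp (-2 * Γ * d) ≠ 0)
    (hα : 0 < Γ.re) (hρL : ρL ≠ 0) :
    d = (Real.log ‖ρL‖ - Real.log ‖ρin YC ρL Γ d‖) /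
        (2 * Γ.re) := by
  rw [rho_in_eq YC ρL Γ d hYC hden, norm_mul, Complex.norm_exp,
    Real.log_mul (norm_ne_zero_iff.mpr hρL) (Real.exp_ne_zero _), Real.log_exp]
  have hre : (-2 * Γ * d).re = -(2 * Γ.re) * d := by
    simp [Complex.mul_re, Complex.mul_im]
  rw [hre]
  have h2 : (2 : ℝ) * Γ.re ≠ 0 := by positivity
  field_simp
  ring
end

section
/- Assume Y_C ≠ 0, ρ_L ≠ 0 and α = Re(Γ) > 0 (a real, lossy line). Then the network admittance determines the distance uniquely: for all d₁, d₂ ≥ 0 with 1 + ρ_L·exp(−2Γd₁) ≠ 0 and 1 + ρ_L·exp(−2Γd₂) ≠ 0, if Y(d₁) = Y(d₂) then d₁ = d₂. -/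
/-- On a real lossy line with a non-matched load, the network admittance
determines the distance uniquely. -/
theorem admittance_determines_distance (YC ρL Γ : ℂ) (hYC : YC ≠ 0)
    (hρL : ρL ≠ 0) (hα : 0 < Γ.re) :
    ∀ d₁ d₂ : ℝ, 0 ≤ d₁ → 0 ≤ d₂ →
      1 + ρL * Complex.exp (-2 * Γ * d₁) ≠ 0 →
      1 + ρL * Complex.exp (-2 * Γ * d₂) ≠ 0 →
      Ynet YC ρL Γ d₁ = Ynet YC ρL Γ d₂ → d₁ = d₂ := by
  intro d₁ d₂ hd₁ hd₂ h1 h2 hY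
  unfold Ynet at hY
  rw [div_eq_div_iff h1 h2] at hY
  have hz : ρL * Complex.exp (-2 * Γ * d₁) = ρL * Complex.exp (-2 * Γ * d₂) := by
    apply mul_left_cancel₀ hYC
    linear_combination -hY / 2
  have hexp : Complex.exp (-2 * Γ * d₁) = Complex.exp (-2 * Γ * d₂) :=
    mul_left_cancel₀ hρL hz
  have habs := congrArg (‖·‖) hexp
  rw [Complex.norm_exp, Complex.norm_exp, Real.exp_eq_exp] at habs
  have hre : (-2 * Γ * (d₁:ℂ)).re = -2 * Γ.re * d₁ := by simp
  have hre2 : (-2 * Γ * (d₂:ℂ)).re = -2 * Γ.re * d₂ := by simp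
  rw [hre, hre2] at habs
  have : Γ.re * d₁ = Γ.re * d₂ := by linarith
  exact mul_left_cancel₀ (ne_of_gt hα) this
end

section
/- Assume Y_C ≠ 0, ρ_L ≠ 0 and α = Re(Γ) > 0. Then the modulus of the input reflection coefficient is a strictly decreasing function of the distance: for all d₁, d₂ ≥ 0 with d₁ < d₂ and 1 + ρ_L·exp(−2Γd₁) ≠ 0 and 1 + ρ_L·exp(−2Γd₂) ≠ 0, one has |ρ(d₂)| < |ρ(d₁)|. -/
lemma ρin_eq (YC ρL Γ : ℂ) (d : ℝ) (hYC : YC ≠ 0)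
    (h : 1 + ρL * Complex.exp (-2 * Γ * d) ≠ 0) :
    ρin YC ρL Γ d = ρL * Complex.exp (-2 * Γ * d) := by
  have key : ∀ u : ℂ, 1 + u ≠ 0 →
      (YC - YC * (1 - u) / (1 + u)) / (YC + YC * (1 - u) / (1 + u)) = u := by
    intro u hu
    rw [div_eq_iff]
    · field_simp
      ring
    · intro hc
      apply hYC
      have : YC * (1 + u) + YC * (1 - u) = 0 := by
        field_simp at hc
        linear_combination hc
      have h2 : YC * 2 = 0 := by linear_combination this
      simpa using h2
  exact key _ h

/-- On a real lossy line with a non-matched load, the modulus of the input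
reflection coefficient is a strictly decreasing function of the distance. -/
theorem abs_reflection_strict_anti (YC ρL Γ : ℂ) (hYC : YC ≠ 0)
    (hρL : ρL ≠ 0) (hα : 0 < Γ.re) :
    ∀ d₁ d₂ : ℝ, 0 ≤ d₁ → 0 ≤ d₂ → d₁ < d₂ →
      1 + ρL * Complex.exp (-2 * Γ * d₁) ≠ 0 →
      1 + ρL * Complex.exp (-2 * Γ * d₂) ≠ 0 →
      ‖ρin YC ρL Γ d₂‖ < ‖ρin YC ρL Γ d₁‖ := by
  intro d₁ d₂ _ _ hlt h1 h2
  rw [ρin_eq YC ρL Γ d₁ hYC h1, ρin_eq YC ρL Γ d₂ hYC h2]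
  rw [norm_mul, norm_mul, Complex.norm_exp, Complex.norm_exp]
  have hre : ∀ d : ℝ, (-2 * Γ * (d : ℂ)).re = -2 * Γ.re * d := by
    intro d; simp [Complex.mul_re, Complex.ofReal_re]
  simp only [hre]
  have hρ : 0 < ‖ρL‖ := by simpa using hρL
  apply mul_lt_mul_of_pos_left _ hρ
  apply Real.exp_lt_exp.mpr
  nlinarith
end

section
/- Quadratic form of the two-node system: suppose the two equations of the system hold for some complex ρ_{L2}, with Y_C + Y_{L1} ≠ 0, 1 + ρ₁x ≠ 0, Y_C + Y₂ − Y_C·(1 − ρ₁x)/(1 + ρ₁x) ≠ 0 and 1 + ρ_{L2}x ≠ 0. Then, setting A = Y₁ − Y_{L1}, the quantity x = exp(−2Γd) satisfies the quadratic equation −Y₂·ρ₁·(Y_C + A)·x² + [(2Y_C − Y₂)·(Y_C + A) − (Y_C − A)·(2Y_C + Y₂)·ρ₁]·x − (Y_C − A)·Y₂ = 0, whose coefficients are polynomial functions of Y₁, Y₂, Y_C and Y_{L1}. -/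
/-- Quadratic form of the two-node system (equation (5)): if the two equations
of the system hold, then `x = exp (-2Γd)` satisfies a quadratic equation whose
coefficients are polynomial functions of `Y₁`, `Y₂`, `Y_C` and `Y_{L1}`. -/
theorem two_node_quadratic (Y1 Y2 YC YL1 ρL2 Γ : ℂ) (d : ℝ)
    (hL1 : YC + YL1 ≠ 0)
    (h1 : 1 + (YC - YL1) / (YC + YL1) * Complex.exp (-2 * Γ * d) ≠ 0)
    (h2 : YC + Y2 - YC * (1 - (YC - YL1) / (YC + YL1) * Complex.exp (-2 * Γ * d)) /
            (1 + (YC - YL1) / (YC + YL1) * Complex.exp (-2 * Γ * d)) ≠ 0)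
    (h3 : 1 + ρL2 * Complex.exp (-2 * Γ * d) ≠ 0)
    (heq1 : Y1 = YC * (1 - ρL2 * Complex.exp (-2 * Γ * d)) /
              (1 + ρL2 * Complex.exp (-2 * Γ * d)) + YL1)
    (heq2 : ρL2 =
      (YC - Y2 + YC * (1 - (YC - YL1) / (YC + YL1) * Complex.exp (-2 * Γ * d)) /
          (1 + (YC - YL1) / (YC + YL1) * Complex.exp (-2 * Γ * d))) /
      (YC + Y2 - YC * (1 - (YC - YL1) / (YC + YL1) * Complex.exp (-2 * Γ * d)) /
          (1 + (YC - YL1) / (YC + YL1) * Complex.exp (-2 * Γ * d)))) :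
    -Y2 * ((YC - YL1) / (YC + YL1)) * (YC + (Y1 - YL1)) * Complex.exp (-2 * Γ * d) ^ 2 +
      ((2 * YC - Y2) * (YC + (Y1 - YL1)) -
          (YC - (Y1 - YL1)) * (2 * YC + Y2) * ((YC - YL1) / (YC + YL1))) *
        Complex.exp (-2 * Γ * d) -
      (YC - (Y1 - YL1)) * Y2 = 0 := by
  set x := Complex.exp (-2 * Γ * d) with hx
  set r := (YC - YL1) / (YC + YL1) with hr
  -- Equation 1 cleared of denominators
  have E1 : (Y1 - YL1) * (1 + ρL2 * x) = YC * (1 - ρL2 * x) := by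
    have : Y1 - YL1 = YC * (1 - ρL2 * x) / (1 + ρL2 * x) := by
      rw [heq1]; ring
    rw [this, div_mul_cancel₀ _ h3]
  -- Equation 2 cleared of denominators
  have hG : YC * (1 - r * x) / (1 + r * x) * (1 + r * x) = YC * (1 - r * x) :=
    div_mul_cancel₀ _ h1
  have E2a : ρL2 * (YC + Y2 - YC * (1 - r * x) / (1 + r * x)) =
      YC - Y2 + YC * (1 - r * x) / (1 + r * x) := by
    rw [heq2, div_mul_cancel₀ _ h2]
  have E2 : ρL2 * ((YC + Y2) * (1 + r * x) - YC * (1 - r * x)) =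
      (YC - Y2) * (1 + r * x) + YC * (1 - r * x) := by
    have := congrArg (· * (1 + r * x)) E2a
    linear_combination this + (ρL2 + 1) * hG
  linear_combination (-(x * (YC + (Y1 - YL1)))) * E2 +
    ((2 * YC + Y2) * r * x + Y2) * E1
end

section
/- Let f : ℂ → ℂ be differentiable on all of ℂ (entire) and not constant. Then for every real number c, the level set {z ∈ ℂ : Im(f(z)) = c} has measure zero with respect to the Lebesgue (volume) measure on ℂ. -/
open Filter MeasureTheory Set
open scoped Topology

/-- A set of reals all of whose points are isolated (within the set) is countable. -/
private lemma countable_of_isolated' {s : Set ℝ}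
    (h : ∀ x ∈ s, ¬ ∃ᶠ y in 𝓝[≠] x, y ∈ s) : s.Countable := by
  have : DiscreteTopology s := by
    rw [discreteTopology_subtype_iff]
    intro x hx
    by_contra hne
    exact h x hx (Filter.frequently_iff_neBot.mpr ⟨hne⟩)
  exact Set.countable_coe_iff.mp
    (TopologicalSpace.separableSpace_iff_countable.mp inferInstance)

/-- Analyticity of `t ↦ Im (f (a + t * d)) - c` for entire `f`. -/
private lemma ana_line (f : ℂ → ℂ) (hf : Differentiable ℂ f) (a d : ℂ) (c : ℝ) (t : ℝ) :
    AnalyticAt ℝ (fun t : ℝ => (f (a + (t : ℂ) * d)).im - c) t := by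
  have hL : AnalyticAt ℝ (fun t : ℝ => a + (t : ℂ) * d) t :=
    analyticAt_const.add ((Complex.ofRealCLM.analyticAt t).mul analyticAt_const)
  exact ((Complex.imCLM.analyticAt _).comp
    (((hf.analyticAt _).restrictScalars).comp hL)).sub analyticAt_const

/-- The level set of the imaginary part of a nonconstant entire function has
Lebesgue measure zero in the complex plane. -/
theorem imaginary_level_set_measure_zero (f : ℂ → ℂ)
    (hf : Differentiable ℂ f) (hnc : ∃ z w : ℂ, f z ≠ f w) (c : ℝ) :
    MeasureTheory.volume {z : ℂ | (f z).im = c} = 0 := by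
  -- Step 1: `Im f` is not identically `c`.
  have hX : ¬ ∀ z : ℂ, (f z).im = c := by
    intro h
    obtain ⟨z, w, hzw⟩ := hnc
    rcases AnalyticOnNhd.is_constant_or_isOpen (fun z _ => hf.analyticAt z)
        isPreconnected_univ with ⟨v, hv⟩ | hopen
    · exact hzw ((hv z trivial).trans (hv w trivial).symm)
    · have ho : IsOpen (f '' Set.univ) := hopen _ subset_rfl isOpen_univ
      have hmem : f 0 ∈ f '' Set.univ := ⟨0, trivial, rfl⟩
      obtain ⟨ε, hε, hball⟩ := Metric.isOpen_iff.mp ho _ hmem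
      have hmem2 : f 0 + (ε / 2 : ℝ) * Complex.I ∈ f '' Set.univ := by
        apply hball
        simp only [Metric.mem_ball, dist_eq_norm, add_sub_cancel_left]
        rw [norm_mul, Complex.norm_I, Complex.norm_real, mul_one,
          Real.norm_eq_abs, abs_of_pos (by linarith)]
        linarith
      obtain ⟨u, -, hu⟩ := hmem2
      have h1 := h u
      have h0 := h 0
      rw [hu] at h1
      simp only [Complex.add_im, Complex.mul_im, Complex.I_im, Complex.I_re,
        Complex.ofReal_re, Complex.ofReal_im, mul_one, mul_zero, zero_mul,
        add_zero, zero_add] at h1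
      rw [h0] at h1
      linarith
  -- generic identity-theorem helper along a line
  have key : ∀ (a d : ℂ) (t₀ : ℝ),
      (∃ᶠ t : ℝ in 𝓝[≠] t₀, (f (a + (t : ℂ) * d)).im = c) →
      ∀ t : ℝ, (f (a + (t : ℂ) * d)).im = c := by
    intro a d t₀ hfreq t
    have hana : AnalyticOnNhd ℝ (fun t : ℝ => (f (a + (t : ℂ) * d)).im - c) Set.univ :=
      fun t _ => ana_line f hf a d c t
    have hEq := hana.eqOn_zero_of_preconnected_of_frequently_eq_zero isPreconnected_univ
      (Set.mem_univ t₀) (hfreq.mono fun t ht => by simp [ht])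
    have := hEq (Set.mem_univ t)
    simpa [sub_eq_zero] using this
  -- Step 2: the bad set of vertical lines on which Im f ≡ c is countable.
  set B : Set ℝ := {x : ℝ | ∀ y : ℝ, (f ((x : ℂ) + (y : ℂ) * Complex.I)).im = c} with hBdef
  have hB : B.Countable := by
    apply countable_of_isolated'
    intro x hx hfreq
    apply hX
    intro z
    have hz : ∀ x' : ℝ, (f ((x' : ℂ) + (z.im : ℂ) * Complex.I)).im = c := by
      intro x'
      have hfreq' : ∃ᶠ t : ℝ in 𝓝[≠] x,
          (f (((z.im : ℂ) * Complex.I) + (t : ℂ) * 1)).im = c := by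
        refine hfreq.mono fun t ht => ?_
        simpa [add_comm] using ht z.im
      have := key ((z.im : ℂ) * Complex.I) 1 x hfreq' x'
      simpa [add_comm] using this
    have := hz z.re
    simpa [Complex.re_add_im] using this
  -- Step 3: Fubini.
  have hSm : MeasurableSet {z : ℂ | (f z).im = c} :=
    (isClosed_eq (Complex.continuous_im.comp hf.continuous) continuous_const).measurableSet
  have hmp : MeasurePreserving (⇑Complex.measurableEquivRealProd.symm)
      ((volume : Measure ℝ).prod (volume : Measure ℝ)) (volume : Measure ℂ) := by
    have h1 := Complex.volume_preserving_equiv_real_prod.symm Complex.measurableEquivRealProd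
    rwa [← MeasureTheory.Measure.volume_eq_prod]
  rw [← hmp.measure_preimage hSm.nullMeasurableSet]
  rw [MeasureTheory.Measure.measure_prod_null
    (Complex.measurableEquivRealProd.symm.measurable hSm)]
  have hae : ∀ᵐ x : ℝ, x ∉ B := by
    rw [← MeasureTheory.measure_eq_zero_iff_ae_notMem]
    exact hB.measure_zero _
  filter_upwards [hae] with x hxB
  simp only [Pi.zero_apply]
  have hset : (Prod.mk x ⁻¹' (⇑Complex.measurableEquivRealProd.symm ⁻¹'
      {z : ℂ | (f z).im = c})) = {y : ℝ | (f ((x : ℂ) + (y : ℂ) * Complex.I)).im = c} := by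
    ext y
    simp only [Set.mem_preimage, Set.mem_setOf_eq, Complex.measurableEquivRealProd_symm_apply]
    rw [Complex.mk_eq_add_mul_I]
  rw [hset]
  have hcnt : {y : ℝ | (f ((x : ℂ) + (y : ℂ) * Complex.I)).im = c}.Countable := by
    apply countable_of_isolated'
    intro y hy hfreq
    exact hxB (key ((x : ℂ)) Complex.I y hfreq)
  exact hcnt.measure_zero _
end

section
/- Probability-zero reality of the computed distance: let X and Y be independent real-valued random variables on a probability space, each of whose laws is absolutely continuous with respect to the Lebesgue measure on ℝ, and set Z = X + iY. Then for every entire nonconstant function f : ℂ → ℂ and every real c, the probability that Im(f(Z)) = c is zero. -/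
open MeasureTheory Complex Set Filter
open scoped Topology

/-- Determinant of multiplication by `d` on `ℂ`, as a real-linear map. -/
lemma det_mul_complex (d : ℂ) :
    (((ContinuousLinearMap.smulRight (1 : ℂ →L[ℂ] ℂ) d)).restrictScalars ℝ).det
      = Complex.normSq d := by
  have h : ((((ContinuousLinearMap.smulRight (1 : ℂ →L[ℂ] ℂ) d)).restrictScalars ℝ :
      ℂ →L[ℝ] ℂ) : ℂ →ₗ[ℝ] ℂ) = Algebra.lmul ℝ ℂ d := by
    ext z
    simp [mul_comm]
  rw [ContinuousLinearMap.det, h, ← Algebra.norm_apply, Algebra.norm_complex_apply]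

/-- The level set of the imaginary part of a nonconstant entire function is Lebesgue-null. -/
lemma volume_im_level_set_eq_zero (f : ℂ → ℂ) (hf : Differentiable ℂ f)
    (hnc : ∃ z w : ℂ, f z ≠ f w) (c : ℝ) :
    volume {z : ℂ | (f z).im = c} = 0 := by
  have hA : ∀ z, AnalyticAt ℂ f z := fun z => hf.analyticAt z
  have hd : ∀ z, AnalyticAt ℂ (deriv f) z := by
    intro z
    have h1 : AnalyticAt ℂ (fun w => (ContinuousLinearMap.apply ℂ ℂ (1 : ℂ)) (fderiv ℂ f w)) z :=
      ((ContinuousLinearMap.apply ℂ ℂ (1 : ℂ)).analyticAt _).comp (hA z).fderiv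
    exact h1.congr (Filter.Eventually.of_forall fun w => by
      simp [ContinuousLinearMap.apply_apply, fderiv_apply_one_eq_deriv])
  have hderiv_cont : Continuous (deriv f) :=
    continuous_iff_continuousAt.mpr fun z => (hd z).continuousAt
  -- the derivative is not identically zero
  have hder_ne : ∃ z, deriv f z ≠ 0 := by
    by_contra h
    push_neg at h
    obtain ⟨z, w, hzw⟩ := hnc
    exact hzw (is_const_of_deriv_eq_zero hf h z w)
  -- the target line is null
  set L : Set ℂ := {w : ℂ | w.im = c} with hLdef
  have hL : volume L = 0 := by
    have hLeq : L = Complex.measurableEquivRealProd ⁻¹' (Set.univ ×ˢ {c}) := by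
      ext z
      simp only [hLdef, Set.mem_setOf_eq, Set.mem_preimage,
        Complex.measurableEquivRealProd_apply, Set.mem_prod, Set.mem_univ, true_and,
        Set.mem_singleton_iff]
    rw [hLeq, Complex.volume_preserving_equiv_real_prod.measure_preimage
      ((MeasurableSet.univ.prod (measurableSet_singleton c)).nullMeasurableSet)]
    rw [MeasureTheory.Measure.volume_eq_prod, MeasureTheory.Measure.prod_prod]
    simp
  set S : Set ℂ := {z : ℂ | (f z).im = c} with hSdef
  have hScl : IsClosed S := isClosed_eq (Complex.continuous_im.comp hf.continuous) continuous_const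
  -- critical points form a null set
  have hC : volume {z : ℂ | deriv f z = 0} = 0 := by
    apply measure_null_of_locally_null
    intro x _
    rcases (hd x).eventually_eq_zero_or_eventually_ne_zero with h | h
    · exfalso
      have hall : EqOn (deriv f) 0 Set.univ :=
        AnalyticOnNhd.eqOn_zero_of_preconnected_of_eventuallyEq_zero
          (fun z _ => hd z) isPreconnected_univ (Set.mem_univ x) h
      obtain ⟨z, hz⟩ := hder_ne
      exact hz (hall (Set.mem_univ z))
    · rw [eventually_nhdsWithin_iff] at h
      refine ⟨{z | z ∈ ({x}ᶜ : Set ℂ) → deriv f z ≠ 0} ∩ {z : ℂ | deriv f z = 0}, ?_, ?_⟩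
      · exact Filter.inter_mem (mem_nhdsWithin_of_mem_nhds h) self_mem_nhdsWithin
      · refine measure_mono_null (fun z hz => ?_) (measure_singleton x)
        by_contra hne
        exact hz.1 hne hz.2
  -- noncritical part of the level set is null
  have hN : volume (S ∩ {z : ℂ | deriv f z ≠ 0}) = 0 := by
    apply measure_null_of_locally_null
    intro x hx
    -- local injectivity around x
    have hstrict : HasStrictDerivAt f (deriv f x) x := by
      obtain ⟨p, hp⟩ := hA x
      have h1 := hp.hasStrictDerivAt
      have h2 : deriv f x = p 1 (fun _ => 1) := h1.hasDerivAt.deriv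
      rwa [← h2] at h1
    have hinv := hstrict.hasStrictFDerivAt_equiv hx.2
    have hli := hinv.eventually_left_inverse
    obtain ⟨t, ht, hmem⟩ := eventually_iff_exists_mem.mp hli
    set u : Set ℂ := interior t with hudef
    have hu : IsOpen u := isOpen_interior
    have hxu : x ∈ u := mem_interior_iff_mem_nhds.mpr ht
    have hinj : Set.InjOn f u := fun a ha b hb hab => by
      have h1 := hmem a (interior_subset ha)
      have h2 := hmem b (interior_subset hb)
      rw [← h1, ← h2, hab]
    set s : Set ℂ := (S ∩ {z : ℂ | deriv f z ≠ 0}) ∩ u with hsdef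
    have hs : MeasurableSet s := by
      refine MeasurableSet.inter (MeasurableSet.inter hScl.measurableSet ?_) hu.measurableSet
      exact (isOpen_ne_fun hderiv_cont continuous_const).measurableSet
    have hfd : ∀ z ∈ s, HasFDerivWithinAt f
        (((ContinuousLinearMap.smulRight (1 : ℂ →L[ℂ] ℂ) (deriv f z))).restrictScalars ℝ) s z := by
      intro z _
      exact (((hf z).hasDerivAt).hasFDerivAt.restrictScalars ℝ).hasFDerivWithinAt
    have hchg := MeasureTheory.lintegral_abs_det_fderiv_eq_addHaar_image volume hs hfd
      (hinj.mono (fun z hz => hz.2))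
    have himgsub : f '' s ⊆ L := by
      rintro w ⟨z, hz, rfl⟩
      exact hz.1.1
    have himg : volume (f '' s) = 0 := measure_mono_null himgsub hL
    rw [himg] at hchg
    -- the integrand is positive on s
    have hmeas_g : Measurable fun z : ℂ => ENNReal.ofReal
        |(((ContinuousLinearMap.smulRight (1 : ℂ →L[ℂ] ℂ)
          (deriv f z))).restrictScalars ℝ).det| := by
      have : (fun z : ℂ => ENNReal.ofReal
          |(((ContinuousLinearMap.smulRight (1 : ℂ →L[ℂ] ℂ)
            (deriv f z))).restrictScalars ℝ).det|)
          = fun z : ℂ => ENNReal.ofReal |Complex.normSq (deriv f z)| := by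
        funext z; rw [det_mul_complex]
      rw [this]
      have hnsq : Continuous fun z : ℂ => Complex.normSq (deriv f z) := by
        simp only [Complex.normSq_apply]
        exact ((Complex.continuous_re.comp hderiv_cont).mul
          (Complex.continuous_re.comp hderiv_cont)).add
          ((Complex.continuous_im.comp hderiv_cont).mul
            (Complex.continuous_im.comp hderiv_cont))
      exact (hnsq.measurable.abs).ennreal_ofReal
    have hae := (MeasureTheory.setLIntegral_eq_zero_iff hs hmeas_g).mp hchg
    have hzero : volume {z : ℂ | z ∈ s ∧ ¬ (ENNReal.ofReal
        |(((ContinuousLinearMap.smulRight (1 : ℂ →L[ℂ] ℂ)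
          (deriv f z))).restrictScalars ℝ).det| = 0)} = 0 := by
      simpa [MeasureTheory.ae_iff, Classical.not_imp] using hae
    have hvs : volume s = 0 := by
      refine measure_mono_null (fun z hz => ?_) hzero
      have hpos : ¬ (ENNReal.ofReal
          |(((ContinuousLinearMap.smulRight (1 : ℂ →L[ℂ] ℂ)
            (deriv f z))).restrictScalars ℝ).det| = 0) := by
        simp only [ENNReal.ofReal_eq_zero, not_le, det_mul_complex]
        exact _root_.abs_pos.mpr fun h0 => hz.1.2 (Complex.normSq_eq_zero.mp h0)
      exact Set.mem_setOf_eq ▸ ⟨hz, hpos⟩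
    exact ⟨s, inter_mem_nhdsWithin _ (hu.mem_nhds hxu), hvs⟩
  refine measure_mono_null (fun z hz => ?_) (measure_union_null hN hC)
  by_cases h : deriv f z = 0
  · exact Or.inr h
  · exact Or.inl ⟨hz, h⟩

open MeasureTheory ProbabilityTheory in
/-- Probability-zero reality of the computed distance: if `Z = X + iY` with
`X`, `Y` independent real random variables having absolutely continuous laws,
then `Im (f Z) = c` with probability zero, for every nonconstant entire `f`. -/
theorem prob_imaginary_part_eq_zero {Ω : Type*} [MeasurableSpace Ω]
    (μ : Measure Ω) [IsProbabilityMeasure μ]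
    (X Y : Ω → ℝ) (hX : Measurable X) (hY : Measurable Y)
    (hindep : IndepFun X Y μ)
    (hXac : μ.map X ≪ volume) (hYac : μ.map Y ≪ volume)
    (f : ℂ → ℂ) (hf : Differentiable ℂ f) (hnc : ∃ z w : ℂ, f z ≠ f w) (c : ℝ) :
    μ {ω | (f ((X ω : ℂ) + (Y ω : ℂ) * Complex.I)).im = c} = 0 := by
  set S : Set ℂ := {z : ℂ | (f z).im = c} with hSdef
  have hS : MeasurableSet S :=
    (isClosed_eq (Complex.continuous_im.comp hf.continuous) continuous_const).measurableSet
  have hvolS : volume S = 0 := volume_im_level_set_eq_zero f hf hnc c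
  set Z : Ω → ℂ := fun ω => (X ω : ℂ) + (Y ω : ℂ) * Complex.I with hZdef
  have hpair : Measurable fun ω => (X ω, Y ω) := hX.prodMk hY
  have hZeq : Z = Complex.measurableEquivRealProd.symm ∘ (fun ω => (X ω, Y ω)) := by
    funext ω
    simp [hZdef, Complex.measurableEquivRealProd_symm_apply, Complex.ext_iff]
  have hZ : Measurable Z := by
    rw [hZeq]
    exact Complex.measurableEquivRealProd.symm.measurable.comp hpair
  have hjoint : μ.map (fun ω => (X ω, Y ω)) = (μ.map X).prod (μ.map Y) :=
    (ProbabilityTheory.indepFun_iff_map_prod_eq_prod_map_map hX.aemeasurable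
      hY.aemeasurable).mp hindep
  have hac2 : μ.map (fun ω => (X ω, Y ω)) ≪ (volume : Measure (ℝ × ℝ)) := by
    rw [hjoint, MeasureTheory.Measure.volume_eq_prod]
    exact hXac.prod hYac
  have hmapZ : μ.map Z ≪ (volume : Measure ℂ) := by
    rw [hZeq, ← Measure.map_map Complex.measurableEquivRealProd.symm.measurable hpair]
    have hvol : (volume : Measure (ℝ × ℝ)).map Complex.measurableEquivRealProd.symm
        = (volume : Measure ℂ) :=
      (Complex.volume_preserving_equiv_real_prod.symm Complex.measurableEquivRealProd).map_eq
    calc (μ.map (fun ω => (X ω, Y ω))).map Complex.measurableEquivRealProd.symm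
        ≪ (volume : Measure (ℝ × ℝ)).map Complex.measurableEquivRealProd.symm :=
          hac2.map Complex.measurableEquivRealProd.symm.measurable
      _ = (volume : Measure ℂ) := hvol
  have : μ {ω | (f ((X ω : ℂ) + (Y ω : ℂ) * Complex.I)).im = c} = μ.map Z S := by
    rw [Measure.map_apply hZ hS]
    rfl
  rw [this]
  exact hmapZ (hvolS ▸ hvolS)
end

section
/- Both candidate distances real with probability zero: let X and Y be independent real-valued random variables on a probability space, each of whose laws is absolutely continuous with respect to the Lebesgue measure on ℝ, and set Z = X + iY. Then for every pair of entire nonconstant functions f, g : ℂ → ℂ, the probability that Im(f(Z)) = 0 and Im(g(Z)) = 0 simultaneously is zero. -/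
open MeasureTheory ProbabilityTheory Filter Set Topology ComplexConjugate

/-- A set of reals all of whose points are isolated (in the set) is countable. -/
lemma aux_countable_of_forall_isolated {s : Set ℝ}
    (h : ∀ x ∈ s, ∀ᶠ y in 𝓝[≠] x, y ∉ s) : s.Countable := by
  have hf : ∀ x ∈ s, ({x} : Set ℝ) ∈ 𝓝[s] x := by
    intro x hx
    have h' := h x hx
    rw [Filter.eventually_iff, mem_nhdsWithin] at h'
    obtain ⟨u, uo, xu, hu⟩ := h'
    rw [mem_nhdsWithin]
    refine ⟨u, uo, xu, ?_⟩
    rintro y ⟨hyu, hys⟩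
    by_contra hne
    exact hu ⟨hyu, fun hyx => hne hyx⟩ hys
  obtain ⟨t, hts, htc, hsub⟩ := TopologicalSpace.countable_cover_nhdsWithin hf
  refine htc.mono ?_
  intro y hy
  simpa using hsub hy

/-- The zero set of a not identically vanishing real analytic function is countable. -/
lemma aux_countable_zeros {φ : ℝ → ℝ} (hφ : ∀ x, AnalyticAt ℝ φ x)
    (hnc : ∃ x, φ x ≠ 0) : {x : ℝ | φ x = 0}.Countable := by
  apply aux_countable_of_forall_isolated
  intro x _
  rcases (hφ x).eventually_eq_zero_or_eventually_ne_zero with h | h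
  · exfalso
    obtain ⟨y, hy⟩ := hnc
    have : EqOn φ 0 univ :=
      AnalyticOnNhd.eqOn_zero_of_preconnected_of_eventuallyEq_zero
        (fun z _ => hφ z) isPreconnected_univ (mem_univ x) h
    exact hy (this (mem_univ y))
  · exact h.mono fun y hy hy' => hy hy'

/-- `z ↦ conj (f (conj z))` is entire when `f` is. -/
lemma aux_differentiable_conj_conj {f : ℂ → ℂ} (hf : Differentiable ℂ f) :
    Differentiable ℂ fun z => conj (f (conj z)) := by
  intro z
  have hd := (hf ((starRingEnd ℂ) z)).hasDerivAt
  rw [hasDerivAt_iff_tendsto_slope] at hd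
  have hconj : Tendsto (fun w : ℂ => conj w) (𝓝[≠] z) (𝓝[≠] (conj z)) := by
    rw [tendsto_nhdsWithin_iff]
    constructor
    · exact (Complex.continuous_conj.tendsto z).mono_left nhdsWithin_le_nhds
    · filter_upwards [self_mem_nhdsWithin] with w hw
      intro hcontra
      exact hw (by simpa using congrArg (starRingEnd ℂ) hcontra)
  have h2 : Tendsto (fun w => conj (slope f (conj z) (conj w))) (𝓝[≠] z)
      (𝓝 (conj (deriv f (conj z)))) :=
    ((Complex.continuous_conj.tendsto _).comp hd).comp hconj
  have h3 : slope (fun w => conj (f (conj w))) z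
      = fun w => conj (slope f (conj z) (conj w)) := by
    funext w
    simp [slope_def_field, map_div₀, map_sub]
  have : HasDerivAt (fun w => conj (f (conj w))) (conj (deriv f (conj z))) z := by
    rw [hasDerivAt_iff_tendsto_slope, h3]
    exact h2
  exact this.differentiableAt

/-- The vertical slice of `Im ∘ f` is real analytic. -/
lemma aux_slice_analytic {f : ℂ → ℂ} (hf : Differentiable ℂ f) (a : ℝ) (y : ℝ) :
    AnalyticAt ℝ (fun y : ℝ => (f ((a : ℂ) + (y : ℂ) * Complex.I)).im) y := by
  have h1 : AnalyticAt ℝ (fun y : ℝ => (a : ℂ) + (y : ℂ) * Complex.I) y :=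
    analyticAt_const.add ((Complex.ofRealCLM.analyticAt y).mul analyticAt_const)
  have h2 : AnalyticAt ℝ f ((a : ℂ) + (y : ℂ) * Complex.I) :=
    (hf.analyticAt _).restrictScalars
  have h4 : AnalyticAt ℝ (f ∘ fun y : ℝ => (a : ℂ) + (y : ℂ) * Complex.I) y :=
    h2.comp_of_eq h1 rfl
  exact (Complex.imCLM.analyticAt (f ((a : ℂ) + (y : ℂ) * Complex.I))).comp_of_eq h4 rfl

/-- Schwarz reflection: if `f` is real on the vertical line `re = b`, then
`f z = conj (f (conj (2b - z)))` everywhere. -/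
lemma aux_reflect {f : ℂ → ℂ} (hf : Differentiable ℂ f)
    (b : ℝ) (hb : ∀ y : ℝ, (f ((b : ℂ) + (y : ℂ) * Complex.I)).im = 0) :
    f = fun z => conj (f (conj (2 * (b : ℂ) - z))) := by
  set G : ℂ → ℂ := fun z => conj (f (conj (2 * (b : ℂ) - z))) with hG
  have hGdiff : Differentiable ℂ G := by
    have h := (aux_differentiable_conj_conj hf).comp
      ((differentiable_const (2 * (b : ℂ))).sub differentiable_id)
    exact h
  have key : ∀ y : ℝ, f ((b : ℂ) + (y : ℂ) * Complex.I)
      = G ((b : ℂ) + (y : ℂ) * Complex.I) := by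
    intro y
    have hz : conj (2 * (b : ℂ) - ((b : ℂ) + (y : ℂ) * Complex.I))
        = (b : ℂ) + (y : ℂ) * Complex.I := by
      simp only [map_sub, map_add, map_mul, Complex.conj_ofReal, Complex.conj_I, map_ofNat]
      ring
    show f _ = conj (f (conj (2 * (b : ℂ) - ((b : ℂ) + (y : ℂ) * Complex.I))))
    rw [hz]
    exact (Complex.conj_eq_iff_im.mpr (hb y)).symm
  -- frequently equal near `b`
  have htend : Tendsto (fun n : ℕ => (b : ℂ) + ((1 / (n + 1) : ℝ) : ℂ) * Complex.I)
      atTop (𝓝[≠] (b : ℂ)) := by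
    rw [tendsto_nhdsWithin_iff]
    constructor
    · have h0 : Tendsto (fun n : ℕ => (1 / (n + 1) : ℝ)) atTop (𝓝 0) :=
        tendsto_one_div_add_atTop_nhds_zero_nat
      have := ((Complex.continuous_ofReal.tendsto 0).comp h0).mul_const Complex.I
      have := (tendsto_const_nhds (x := (b : ℂ))).add this
      simpa using this
    · refine Eventually.of_forall fun n => ?_
      simp only [Set.mem_compl_iff, Set.mem_singleton_iff]
      intro hcontra
      have h1 : (1 / (n + 1) : ℝ) * 1 + 0 * 0 = 0 := by
        have h0 := congrArg Complex.im hcontra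
        simp only [Complex.add_im, Complex.ofReal_im, Complex.mul_im, Complex.ofReal_re,
          Complex.I_im, Complex.I_re, zero_add] at h0
        exact h0
      rw [mul_one, mul_zero, add_zero] at h1
      have h2 : (0 : ℝ) < 1 / (n + 1) := by positivity
      rw [h1] at h2
      exact lt_irrefl 0 h2
  have hfreq : ∃ᶠ z in 𝓝[≠] (b : ℂ), f z = G z :=
    htend.frequently ((Eventually.of_forall fun n => key _).frequently)
  exact AnalyticOnNhd.eq_of_frequently_eq (fun z _ => hf.analyticAt z)
    (fun z _ => hGdiff.analyticAt z) hfreq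

/-- Two real vertical lines ⟹ horizontal period. -/
lemma aux_period {f : ℂ → ℂ} (hf : Differentiable ℂ f) (a b : ℝ)
    (ha : ∀ y : ℝ, (f ((a : ℂ) + (y : ℂ) * Complex.I)).im = 0)
    (hb : ∀ y : ℝ, (f ((b : ℂ) + (y : ℂ) * Complex.I)).im = 0)
    (z : ℂ) : f (z + 2 * ((a : ℂ) - b)) = f z := by
  have Ha := aux_reflect hf a ha
  have Hb := aux_reflect hf b hb
  have h1 : f z = conj (f (conj (2 * (b : ℂ) - z))) := congrFun Hb z
  have h2 : f (conj (2 * (b : ℂ) - z))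
      = conj (f (conj (2 * (a : ℂ) - conj (2 * (b : ℂ) - z)))) := congrFun Ha _
  have h3 : conj (2 * (a : ℂ) - conj (2 * (b : ℂ) - z)) = z + 2 * ((a : ℂ) - b) := by
    simp only [map_sub, map_mul, Complex.conj_conj, Complex.conj_ofReal, map_ofNat]
    ring
  rw [h3] at h2
  rw [h1, h2, Complex.conj_conj]

/-- The set of `a` such that `f` is real on the whole vertical line `re = a`
is countable, for nonconstant entire `f`. -/
lemma aux_S_countable {f : ℂ → ℂ} (hf : Differentiable ℂ f)
    (hnc : ∃ z w : ℂ, f z ≠ f w) :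
    {a : ℝ | ∀ y : ℝ, (f ((a : ℂ) + (y : ℂ) * Complex.I)).im = 0}.Countable := by
  set S := {a : ℝ | ∀ y : ℝ, (f ((a : ℂ) + (y : ℂ) * Complex.I)).im = 0} with hS
  rcases eq_empty_or_nonempty S with h | ⟨a, ha⟩
  · simp [h]
  set P : AddSubgroup ℝ :=
    { carrier := {t : ℝ | ∀ z : ℂ, f (z + (t : ℂ)) = f z}
      zero_mem' := by intro z; simp
      add_mem' := by
        intro s t hs ht z
        have h1 : z + ((s + t : ℝ) : ℂ) = (z + (s : ℂ)) + (t : ℂ) := by push_cast; ring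
        rw [h1, ht (z + (s : ℂ)), hs z]
      neg_mem' := by
        intro t ht z
        have h1 : (z + ((-t : ℝ) : ℂ)) + (t : ℂ) = z := by push_cast; ring
        have := ht (z + ((-t : ℝ) : ℂ))
        rw [h1] at this
        exact this.symm } with hP
  rcases AddSubgroup.dense_or_cyclic P with hd | ⟨g₀, hg⟩
  · exfalso
    have hper : ∀ t : ℝ, ∀ z : ℂ, f (z + (t : ℂ)) = f z := by
      intro t z
      have hc : IsClosed {t : ℝ | f (z + (t : ℂ)) = f z} := by
        apply isClosed_eq _ continuous_const
        exact hf.continuous.comp (continuous_const.add Complex.continuous_ofReal)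
      have hsub : (P : Set ℝ) ⊆ {t : ℝ | f (z + (t : ℂ)) = f z} := fun t htP => htP z
      have : closure (P : Set ℝ) ⊆ {t : ℝ | f (z + (t : ℂ)) = f z} :=
        hc.closure_subset_iff.mpr hsub
      rw [hd.closure_eq] at this
      exact this (mem_univ t)
    obtain ⟨z, w, hzw⟩ := hnc
    have hconst : f = fun _ => f 0 := by
      apply AnalyticOnNhd.eq_of_frequently_eq (fun z _ => hf.analyticAt z)
        (fun z _ => analyticAt_const) (z₀ := (0 : ℂ))
      have htend : Tendsto (fun n : ℕ => (((1 / (n + 1) : ℝ)) : ℂ)) atTop (𝓝[≠] (0 : ℂ)) := by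
        rw [tendsto_nhdsWithin_iff]
        constructor
        · have h0 : Tendsto (fun n : ℕ => (1 / (n + 1) : ℝ)) atTop (𝓝 0) :=
            tendsto_one_div_add_atTop_nhds_zero_nat
          have h1 := (Complex.continuous_ofReal.tendsto 0).comp h0
          rw [Complex.ofReal_zero] at h1
          simpa [Function.comp_def] using h1
        · refine Eventually.of_forall fun n => ?_
          simp only [Set.mem_compl_iff, Set.mem_singleton_iff, Complex.ofReal_eq_zero]
          positivity
      apply htend.frequently
      apply (Eventually.of_forall fun n => ?_).frequently
      have := hper (1 / (n + 1) : ℝ) 0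
      simpa using this
    exact hzw (by rw [hconst])
  · have hPc : (P : Set ℝ).Countable := by
      have hsub : (P : Set ℝ) ⊆ Set.range fun n : ℤ => n • g₀ := by
        intro t ht
        rw [hg] at ht
        rcases AddSubgroup.mem_closure_singleton.mp ht with ⟨n, hn⟩
        exact ⟨n, hn⟩
      exact (Set.countable_range _).mono hsub
    have hsub : S ⊆ (fun t => a - t / 2) '' (P : Set ℝ) := by
      intro b hb
      refine ⟨2 * (a - b), ?_, by ring⟩
      intro z
      have := aux_period hf a b ha hb z
      have hc : ((2 * (a - b) : ℝ) : ℂ) = 2 * ((a : ℂ) - b) := by push_cast; ring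
      rw [hc]
      exact this
    exact (hPc.image _).mono hsub

open MeasureTheory ProbabilityTheory in
/-- Both candidate distances real with probability zero: if `Z = X + iY` with
`X`, `Y` independent real random variables having absolutely continuous laws,
then for nonconstant entire `f` and `g`, the event that both `Im (f Z) = 0`
and `Im (g Z) = 0` has probability zero. -/
theorem prob_both_imaginary_parts_zero {Ω : Type*} [MeasurableSpace Ω]
    (μ : Measure Ω) [IsProbabilityMeasure μ]
    (X Y : Ω → ℝ) (hX : Measurable X) (hY : Measurable Y)
    (hindep : IndepFun X Y μ)
    (hXac : μ.map X ≪ volume) (hYac : μ.map Y ≪ volume)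
    (f g : ℂ → ℂ) (hf : Differentiable ℂ f) (hg : Differentiable ℂ g)
    (hncf : ∃ z w : ℂ, f z ≠ f w) (hncg : ∃ z w : ℂ, g z ≠ g w) :
    μ {ω | (f ((X ω : ℂ) + (Y ω : ℂ) * Complex.I)).im = 0 ∧
           (g ((X ω : ℂ) + (Y ω : ℂ) * Complex.I)).im = 0} = 0 := by
  set B : Set (ℝ × ℝ) := {p | (f ((p.1 : ℂ) + (p.2 : ℂ) * Complex.I)).im = 0} with hB
  have hBm : MeasurableSet B := by
    have hcont : Continuous fun p : ℝ × ℝ => (f ((p.1 : ℂ) + (p.2 : ℂ) * Complex.I)).im := by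
      apply Complex.continuous_im.comp
      apply hf.continuous.comp
      exact (Complex.continuous_ofReal.comp continuous_fst).add
        ((Complex.continuous_ofReal.comp continuous_snd).mul continuous_const)
    exact hcont.measurable (measurableSet_singleton 0)
  have hsub : {ω | (f ((X ω : ℂ) + (Y ω : ℂ) * Complex.I)).im = 0 ∧
           (g ((X ω : ℂ) + (Y ω : ℂ) * Complex.I)).im = 0}
      ⊆ (fun ω => (X ω, Y ω)) ⁻¹' B := fun ω hω => hω.1
  apply measure_mono_null hsub
  have hmap : μ.map (fun ω => (X ω, Y ω)) = (μ.map X).prod (μ.map Y) :=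
    (indepFun_iff_map_prod_eq_prod_map_map hX.aemeasurable hY.aemeasurable).mp hindep
  haveI : IsProbabilityMeasure (μ.map Y) := Measure.isProbabilityMeasure_map hY.aemeasurable
  rw [← Measure.map_apply (hX.prodMk hY) hBm, hmap, Measure.prod_apply hBm]
  set S := {a : ℝ | ∀ y : ℝ, (f ((a : ℂ) + (y : ℂ) * Complex.I)).im = 0} with hS
  have hS0 : μ.map X S = 0 := hXac ((aux_S_countable hf hncf).measure_zero _)
  have hae : (fun x => μ.map Y (Prod.mk x ⁻¹' B)) =ᵐ[μ.map X] fun _ => 0 := by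
    rw [Filter.eventuallyEq_iff_exists_mem]
    refine ⟨Sᶜ, ?_, ?_⟩
    · rw [mem_ae_iff, compl_compl]
      exact hS0
    · intro x hx
      have hslice : (Prod.mk x ⁻¹' B).Countable := by
        have : Prod.mk x ⁻¹' B = {y : ℝ | (f ((x : ℂ) + (y : ℂ) * Complex.I)).im = 0} := rfl
        rw [this]
        apply aux_countable_zeros (aux_slice_analytic hf x)
        by_contra hcon
        push_neg at hcon
        exact hx fun y => hcon y
      exact hYac (hslice.measure_zero _)
  rw [lintegral_congr_ae hae]
  simp
end
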